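/- arXiv:2104.02983 — 2 statements merged into one kernel-verified Lean document; each statement's English description precedes it below -/
import Mathlib

section
/- Consider the full mixed NCW Lanchester system: B' = −[αd + (αc − αd)·N/N0]·R − γ·A, R' = −π1·βR·B, N' = −π2·βN·B, A' = −π3·βA·B, with all parameters nonnegative, αd ≤ αc, N0 > 0, and initial values R(0)=R0, N(0)=N0, A(0)=A0. Let X(t) = ∫₀ᵗ B(s) ds. Then X satisfies X'' = −C1·X² + C2·X − C3 where C1 = π1·π2·βR·βN·(αc − αd)/N0, C2 = [π2·βN·(αc − αd)·R0 + π1·βR·αc·N0]/N0 + γ·π3·βA, and C3 = αc·R0 + γ·A0. -/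
theorem stmt_9 (B R N A : ℝ → ℝ)
    (p1 p2 p3 bR bN bA ac ad g R0 N0 A0 : ℝ)
    (hp1 : 0 ≤ p1) (hp2 : 0 ≤ p2) (hp3 : 0 ≤ p3)
    (hbR : 0 ≤ bR) (hbN : 0 ≤ bN) (hbA : 0 ≤ bA)
    (hac : 0 ≤ ac) (had : 0 ≤ ad) (hg : 0 ≤ g)
    (hda : ad ≤ ac) (hN0 : 0 < N0)
    (hBcont : Continuous B)
    (hB : ∀ t, HasDerivAt B
      (-((ad + (ac - ad) * N t / N0) * R t) - g * A t) t)
    (hR : ∀ t, HasDerivAt R (-(p1 * bR * B t)) t)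
    (hN : ∀ t, HasDerivAt N (-(p2 * bN * B t)) t)
    (hA : ∀ t, HasDerivAt A (-(p3 * bA * B t)) t)
    (hR0 : R 0 = R0) (hN0' : N 0 = N0) (hA0 : A 0 = A0)
    (X : ℝ → ℝ) (hX : ∀ t, X t = ∫ s in (0:ℝ)..t, B s) :
    ∀ t : ℝ,
      HasDerivAt X (B t) t ∧
      HasDerivAt B
        (-(p1 * p2 * bR * bN * (ac - ad) / N0) * (X t) ^ 2 +
          ((p2 * bN * (ac - ad) * R0 + p1 * bR * ac * N0) / N0 + g * p3 * bA)
            * X t -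
          (ac * R0 + g * A0)) t := by
  have hXeq : X = fun t => ∫ s in (0:ℝ)..t, B s := funext hX
  have hXd : ∀ t, HasDerivAt X (B t) t := by
    intro t
    rw [hXeq]
    exact (hBcont.integral_hasStrictDerivAt 0 t).hasDerivAt
  have hX0 : X 0 = 0 := by rw [hX]; simp
  -- general lemma: if f' = -c * B, then f t = f 0 - c * X t
  have key : ∀ (f : ℝ → ℝ) (c : ℝ), (∀ t, HasDerivAt f (-(c * B t)) t) →
      ∀ t, f t = f 0 - c * X t := by
    intro f c hf t
    have hconst : ∀ u v : ℝ, f u + c * X u = f v + c * X v := by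
      apply is_const_of_deriv_eq_zero
      · intro u
        exact ((hf u).add ((hXd u).const_mul c)).differentiableAt
      · intro u
        have := ((hf u).add ((hXd u).const_mul c)).deriv
        simpa [Pi.add_def] using this
    have := hconst t 0
    rw [hX0] at this
    linarith
  intro t
  refine ⟨hXd t, ?_⟩
  have hRt := key R (p1 * bR) hR t
  have hNt := key N (p2 * bN) hN t
  have hAt := key A (p3 * bA) hA t
  rw [hR0] at hRt; rw [hN0'] at hNt; rw [hA0] at hAt
  have heq : -((ad + (ac - ad) * N t / N0) * R t) - g * A t =
      -(p1 * p2 * bR * bN * (ac - ad) / N0) * (X t) ^ 2 +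
        ((p2 * bN * (ac - ad) * R0 + p1 * bR * ac * N0) / N0 + g * p3 * bA)
          * X t -
        (ac * R0 + g * A0) := by
    rw [hRt, hNt, hAt]
    field_simp
    ring
  rw [← heq]
  exact hB t
end

section
/- Let b1, b2, b3 ≥ 0 and a ≥ 0. Define Π* = (1,0,0) if b1 ≥ b2 and b1 ≥ b3; Π* = (0,1,0) if b2 ≥ b1 ≥ b3 or b2 ≥ b3 ≥ b1; Π* = (0,0,1) if b3 ≥ b1 ≥ b2 or b3 ≥ b2 ≥ b1. Then for every λ ∈ [0,1] and every (x,y,z) in the standard 2-simplex, F(x,y,z) = λ·a·x·y − (1−λ)·(b1·x + b2·y + b3·z) ≥ F(Π*). -/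
lemma key_aux (a b1 b2 b3 bm : ℝ) (ha : 0 ≤ a)
    (h1 : b1 ≤ bm) (h2 : b2 ≤ bm) (h3 : b3 ≤ bm)
    (l : ℝ) (hl0 : 0 ≤ l) (hl1 : l ≤ 1)
    (x y z : ℝ) (hx : 0 ≤ x) (hy : 0 ≤ y) (hz : 0 ≤ z) (hs : x + y + z = 1) :
    l * a * x * y - (1 - l) * (b1 * x + b2 * y + b3 * z) ≥ -((1 - l) * bm) := by
  have h0 : 0 ≤ l * a * x * y :=
    mul_nonneg (mul_nonneg (mul_nonneg hl0 ha) hx) hy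
  have hl : 0 ≤ 1 - l := by linarith
  have hbm : bm * (x + y + z) = bm := by rw [hs]; ring
  have hle : b1 * x + b2 * y + b3 * z ≤ bm := by
    nlinarith [mul_nonneg (sub_nonneg.2 h1) hx,
      mul_nonneg (sub_nonneg.2 h2) hy,
      mul_nonneg (sub_nonneg.2 h3) hz]
  have := mul_le_mul_of_nonneg_left hle hl
  linarith

open scoped Classical in
theorem stmt_13 (a b1 b2 b3 : ℝ)
    (ha : 0 ≤ a) (hb1 : 0 ≤ b1) (hb2 : 0 ≤ b2) (hb3 : 0 ≤ b3)
    (Pstar : ℝ × ℝ × ℝ)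
    (hPstar : Pstar =
      if b1 ≥ b2 ∧ b1 ≥ b3 then (1, 0, 0)
      else if (b2 ≥ b1 ∧ b1 ≥ b3) ∨ (b2 ≥ b3 ∧ b3 ≥ b1) then (0, 1, 0)
      else (0, 0, 1))
    (F : ℝ → ℝ → ℝ → ℝ → ℝ)
    (hF : ∀ l x y z : ℝ,
      F l x y z = l * a * x * y - (1 - l) * (b1 * x + b2 * y + b3 * z)) :
    ∀ l : ℝ, 0 ≤ l → l ≤ 1 →
      ∀ x y z : ℝ, 0 ≤ x → 0 ≤ y → 0 ≤ z → x + y + z = 1 →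
        F l x y z ≥ F l Pstar.1 Pstar.2.1 Pstar.2.2 := by
  intro l hl0 hl1 x y z hx hy hz hs
  rw [hF, hF]
  split_ifs at hPstar with h1 h2
  · subst hPstar
    have := key_aux a b1 b2 b3 b1 ha le_rfl h1.1 h1.2 l hl0 hl1 x y z hx hy hz hs
    simp only [ge_iff_le]
    nlinarith
  · subst hPstar
    have hm : b1 ≤ b2 ∧ b3 ≤ b2 := by
      rcases h2 with ⟨ha1, ha2⟩ | ⟨ha1, ha2⟩
      · exact ⟨ha1, le_trans ha2 ha1⟩
      · exact ⟨le_trans ha2 ha1, ha1⟩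
    have := key_aux a b1 b2 b3 b2 ha hm.1 le_rfl hm.2 l hl0 hl1 x y z hx hy hz hs
    simp only [ge_iff_le]
    nlinarith
  · subst hPstar
    push_neg at h1 h2
    have h31 : b1 ≤ b3 := by
      rcases le_total b2 b1 with hc | hc
      · exact le_of_lt (h1 hc)
      · exact le_of_lt (h2.1 hc)
    have h32 : b2 ≤ b3 := by
      by_contra hcon
      push_neg at hcon
      have := h2.2 (le_of_lt hcon)
      linarith
    have := key_aux a b1 b2 b3 b3 ha h31 h32 le_rfl l hl0 hl1 x y z hx hy hz hs
    simp only [ge_iff_le]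
    nlinarith
end
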